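/- Let n ≥ 3 and let Y be a simple graph on n vertices such that either Y has an isolated vertex or |E(Y)| ≤ n−2. Then the diameter of any connected component of the friends-and-strangers graph FS(Cycle_n, Y) is at most |E(Y)|. -/

import Mathlib

open SimpleGraph
open Fin.CommRing Fin.NatCast

/-- Adjacency in the friends-and-strangers graph: bijections `σ` and `τ` are adjacent iff there
is an edge `{a, b}` of `X` such that `{σ a, σ b}` is an edge of `Y`, `σ a = τ b`, `σ b = τ a`,
and `σ c = τ c` for every vertex `c` other than `a` and `b`. -/
def fsAdj {α β : Type*} (X : SimpleGraph α) (Y : SimpleGraph β) (σ τ : α ≃ β) : Prop :=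
  ∃ a b : α, X.Adj a b ∧ Y.Adj (σ a) (σ b) ∧ σ a = τ b ∧ σ b = τ a ∧
    ∀ c : α, c ≠ a → c ≠ b → σ c = τ c

/-- The friends-and-strangers graph `FS(X, Y)` of two simple graphs on the same number of
vertices; its vertices are bijections from `V(X)` to `V(Y)`. -/
def FS {α β : Type*} (X : SimpleGraph α) (Y : SimpleGraph β) : SimpleGraph (α ≃ β) where
  Adj := fsAdj X Y
  symm := by
    constructor
    rintro σ τ ⟨a, b, hX, hY, h1, h2, h3⟩
    refine ⟨a, b, hX, ?_, h2.symm, h1.symm, fun c hca hcb => (h3 c hca hcb).symm⟩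
    rw [← h2, ← h1]
    exact hY.symm
  loopless := by
    constructor
    rintro σ ⟨a, b, hX, hY, h1, _, _⟩
    exact hX.ne (σ.injective h1)

namespace FSAux

variable {m : ℕ}

/-- coordinate of a token `u` in the arrangement `ρ`, measured around the cycle
starting just after the cut position `p0`. -/
def qc (p0 : Fin (m+3)) (ρ : Fin (m+3) ≃ Fin (m+3)) (u : Fin (m+3)) : ℕ :=
  ((ρ.symm u) - (p0+1)).val

lemma qc_injective (p0 : Fin (m+3)) (ρ : Fin (m+3) ≃ Fin (m+3)) :
    Function.Injective (qc p0 ρ) := by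
  intro u v h
  have h2 : (ρ.symm u) - (p0+1) = (ρ.symm v) - (p0+1) := Fin.ext h
  exact ρ.symm.injective (by rwa [sub_left_inj] at h2)

/-- The set of "discordant" (inverted) ordered token pairs between `ρ` and `τ`. -/
def D (p0 : Fin (m+3)) (ρ τ : Fin (m+3) ≃ Fin (m+3)) : Set (Fin (m+3) × Fin (m+3)) :=
  {z | qc p0 ρ z.1 < qc p0 ρ z.2 ∧ qc p0 τ z.2 < qc p0 τ z.1}

lemma sub_ne_last {a p0 : Fin (m+3)} (h : a ≠ p0) : a - (p0+1) ≠ Fin.last (m+2) := by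
  have h1 : (Fin.last (m+2) : Fin (m+3)) = -1 :=
    eq_neg_of_add_eq_zero_left (Fin.last_add_one (n := m+2))
  intro hc
  apply h
  rw [h1, sub_eq_iff_eq_add] at hc
  rw [hc]; ring

lemma qc_add_one (p0 : Fin (m+3)) (ρ : Fin (m+3) ≃ Fin (m+3)) {a : Fin (m+3)} (ha : a ≠ p0) :
    qc p0 ρ (ρ (a+1)) = qc p0 ρ (ρ a) + 1 := by
  unfold qc
  rw [Equiv.symm_apply_apply, Equiv.symm_apply_apply]
  have h1 : (a + 1) - (p0+1) = (a - (p0+1)) + 1 := by ring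
  rw [h1, Fin.val_add_one]
  simp [sub_ne_last ha]

lemma qc_swap_left (p0 : Fin (m+3)) (ρ : Fin (m+3) ≃ Fin (m+3)) (a b : Fin (m+3)) :
    qc p0 ((Equiv.swap a b).trans ρ) (ρ a) = qc p0 ρ (ρ b) := by
  unfold qc
  simp [Equiv.symm_apply_apply, Equiv.swap_apply_left]

lemma qc_swap_right (p0 : Fin (m+3)) (ρ : Fin (m+3) ≃ Fin (m+3)) (a b : Fin (m+3)) :
    qc p0 ((Equiv.swap a b).trans ρ) (ρ b) = qc p0 ρ (ρ a) := by
  unfold qc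
  simp [Equiv.symm_apply_apply, Equiv.swap_apply_right]

lemma qc_swap_other (p0 : Fin (m+3)) (ρ : Fin (m+3) ≃ Fin (m+3)) (a b : Fin (m+3))
    {u : Fin (m+3)} (hu1 : u ≠ ρ a) (hu2 : u ≠ ρ b) :
    qc p0 ((Equiv.swap a b).trans ρ) u = qc p0 ρ u := by
  unfold qc
  simp only [Equiv.symm_trans_apply, Equiv.symm_swap]
  rw [Equiv.swap_apply_of_ne_of_ne]
  · intro hc; exact hu1 (by rw [← hc, Equiv.apply_symm_apply])
  · intro hc; exact hu2 (by rw [← hc, Equiv.apply_symm_apply])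

end FSAux

namespace FSAux

variable {m : ℕ}

lemma qc_lt_iff (p0 : Fin (m+3)) (ρ τ : Fin (m+3) ≃ Fin (m+3)) {a b : Fin (m+3)}
    (hb : b = a + 1) (ha : a ≠ p0) (u v : Fin (m+3))
    (h1 : ¬(u = ρ a ∧ v = ρ b)) (h2 : ¬(u = ρ b ∧ v = ρ a)) :
    (qc p0 ((Equiv.swap a b).trans ρ) u < qc p0 ((Equiv.swap a b).trans ρ) v ↔
      qc p0 ρ u < qc p0 ρ v) := by
  have hkey : qc p0 ρ (ρ b) = qc p0 ρ (ρ a) + 1 := by rw [hb]; exact qc_add_one p0 ρ ha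
  set k := qc p0 ρ (ρ a) with hk
  by_cases hu1 : u = ρ a
  · by_cases hv1 : v = ρ a
    · subst hu1; subst hv1; omega
    by_cases hv2 : v = ρ b
    · exact absurd ⟨hu1, hv2⟩ h1
    · subst hu1
      rw [qc_swap_left, qc_swap_other p0 ρ a b hv1 hv2, hkey]
      have hne1 : qc p0 ρ v ≠ k := fun hc => hv1 (qc_injective p0 ρ (hc.trans hk.symm ▸ hc))
      have hne2 : qc p0 ρ v ≠ k + 1 := fun hc => hv2 (qc_injective p0 ρ (by rw [hc, ← hkey]))
      omega
  by_cases hu2 : u = ρ b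
  · by_cases hv2 : v = ρ b
    · subst hu2; subst hv2; omega
    by_cases hv1 : v = ρ a
    · exact absurd ⟨hu2, hv1⟩ h2
    · subst hu2
      rw [qc_swap_right, qc_swap_other p0 ρ a b hv1 hv2, hkey]
      have hne1 : qc p0 ρ v ≠ k := fun hc => hv1 (qc_injective p0 ρ (by rw [hc, hk]))
      have hne2 : qc p0 ρ v ≠ k + 1 := fun hc => hv2 (qc_injective p0 ρ (by rw [hc, ← hkey]))
      omega
  · rw [qc_swap_other p0 ρ a b hu1 hu2]
    by_cases hv1 : v = ρ a
    · subst hv1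
      rw [qc_swap_left, hkey]
      have hne1 : qc p0 ρ u ≠ k := fun hc => hu1 (qc_injective p0 ρ (by rw [hc, hk]))
      have hne2 : qc p0 ρ u ≠ k + 1 := fun hc => hu2 (qc_injective p0 ρ (by rw [hc, ← hkey]))
      omega
    by_cases hv2 : v = ρ b
    · subst hv2
      rw [qc_swap_right, hkey]
      have hne1 : qc p0 ρ u ≠ k := fun hc => hu1 (qc_injective p0 ρ (by rw [hc, hk]))
      have hne2 : qc p0 ρ u ≠ k + 1 := fun hc => hu2 (qc_injective p0 ρ (by rw [hc, ← hkey]))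
      omega
    · rw [qc_swap_other p0 ρ a b hv1 hv2]

lemma D_mem_iff (p0 : Fin (m+3)) (ρ τ : Fin (m+3) ≃ Fin (m+3)) {a b : Fin (m+3)}
    (hb : b = a + 1) (ha : a ≠ p0) (u v : Fin (m+3))
    (h1 : ¬(u = ρ a ∧ v = ρ b)) (h2 : ¬(u = ρ b ∧ v = ρ a)) :
    ((u, v) ∈ D p0 ((Equiv.swap a b).trans ρ) τ ↔ (u, v) ∈ D p0 ρ τ) := by
  unfold D
  rw [Set.mem_setOf_eq, Set.mem_setOf_eq]
  simp only
  rw [qc_lt_iff p0 ρ τ hb ha u v h1 h2]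

end FSAux

namespace FSAux

variable {m : ℕ}

lemma D_swap_eq (p0 : Fin (m+3)) (ρ τ : Fin (m+3) ≃ Fin (m+3)) {a b : Fin (m+3)}
    (hb : b = a + 1) (ha : a ≠ p0) (hinv : (ρ a, ρ b) ∈ D p0 ρ τ) :
    D p0 ((Equiv.swap a b).trans ρ) τ = D p0 ρ τ \ {(ρ a, ρ b)} := by
  have hkey : qc p0 ρ (ρ b) = qc p0 ρ (ρ a) + 1 := by rw [hb]; exact qc_add_one p0 ρ ha
  have hinv1 : qc p0 ρ (ρ a) < qc p0 ρ (ρ b) := hinv.1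
  have hinv2 : qc p0 τ (ρ b) < qc p0 τ (ρ a) := hinv.2
  ext ⟨u, v⟩
  by_cases h1 : u = ρ a ∧ v = ρ b
  · obtain ⟨rfl, rfl⟩ := h1
    simp only [Set.mem_diff, Set.mem_singleton_iff, and_self, not_true_eq_false, and_false,
      iff_false]
    intro hc
    have hc1 : qc p0 ((Equiv.swap a b).trans ρ) (ρ a) < qc p0 ((Equiv.swap a b).trans ρ) (ρ b) :=
      hc.1
    rw [qc_swap_left, qc_swap_right, hkey] at hc1
    omega
  by_cases h2 : u = ρ b ∧ v = ρ a
  · obtain ⟨rfl, rfl⟩ := h2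
    constructor
    · intro hc
      have hc2 : qc p0 τ (ρ a) < qc p0 τ (ρ b) := hc.2
      omega
    · intro hc
      have hc1 : qc p0 ρ (ρ b) < qc p0 ρ (ρ a) := hc.1.1
      omega
  · rw [D_mem_iff p0 ρ τ hb ha u v h1 h2]
    simp only [Set.mem_diff, Set.mem_singleton_iff, Prod.mk.injEq]
    constructor
    · intro hm; exact ⟨hm, fun hc => h1 ⟨hc.1, hc.2⟩⟩
    · intro hm; exact hm.1

/-- An injective non-identity self-map of `Fin N` has an adjacent descent. -/
lemma exists_descent {N : ℕ} (π : Fin N → Fin N) (hinj : Function.Injective π)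
    (hne : π ≠ id) :
    ∃ k : Fin N, ∃ h : k.val + 1 < N, (π ⟨k.val + 1, h⟩).val < (π k).val := by
  by_contra hc
  push_neg at hc
  have step : ∀ k : Fin N, ∀ h : k.val + 1 < N, (π k).val < (π ⟨k.val + 1, h⟩).val := by
    intro k h
    have h1 := hc k h
    have h2 : π k ≠ π ⟨k.val + 1, h⟩ := fun he => by
      have h4 := congrArg Fin.val (hinj he)
      simp at h4
    have h3 : (π k).val ≠ (π ⟨k.val + 1, h⟩).val := fun he => h2 (Fin.ext he)
    omega
  have hmono : StrictMono π := by
    have main : ∀ d : ℕ, ∀ i j : Fin N, j.val = i.val + d + 1 → (π i).val < (π j).val := by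
      intro d
      induction d with
      | zero =>
        intro i j hj
        have h' : i.val + 1 < N := hj ▸ j.isLt
        have hje : j = ⟨i.val + 1, h'⟩ := Fin.ext (show j.val = i.val + 1 by omega)
        rw [hje]; exact step i h'
      | succ d ih =>
        intro i j hj
        have hj' : j.val - 1 < N := by omega
        have hlt1 : (π i).val < (π ⟨j.val - 1, hj'⟩).val :=
          ih i ⟨j.val - 1, hj'⟩ (show j.val - 1 = i.val + d + 1 by omega)
        have h'' : (⟨j.val - 1, hj'⟩ : Fin N).val + 1 < N := by
          show j.val - 1 + 1 < N; omega
        have hje : j = ⟨(⟨j.val - 1, hj'⟩ : Fin N).val + 1, h''⟩ :=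
          Fin.ext (show j.val = j.val - 1 + 1 by omega)
        rw [hje]
        exact hlt1.trans (step ⟨j.val - 1, hj'⟩ h'')
    intro i j hij
    exact main (j.val - i.val - 1) i j (by omega)
  have hsurj : Function.Surjective π := Finite.surjective_of_injective hinj
  let oi := StrictMono.orderIsoOfSurjective π hmono hsurj
  apply hne
  funext k
  haveI : WellFoundedLT (Fin N) := inferInstance
  have h1 : k ≤ π k := StrictMono.le_apply (β := Fin N) hmono
  have h2 : π k ≤ oi.symm (π k) := StrictMono.le_apply (β := Fin N) oi.symm.strictMono
  have h3 : oi.symm (π k) = k := by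
    have h4 : oi k = π k := rfl
    rw [← h4, OrderIso.symm_apply_apply]
  rw [h3] at h2
  show π k = k
  exact le_antisymm h2 h1

end FSAux

namespace FSAux

variable {m : ℕ}

/-- color of a token: its connected component in `Y`. -/
def col (Y : SimpleGraph (Fin (m+3))) (u : Fin (m+3)) : Y.ConnectedComponent :=
  Y.connectedComponentMk u

lemma adj_col {Y : SimpleGraph (Fin (m+3))} {ρ ρ₁ : Fin (m+3) ≃ Fin (m+3)}
    (h : (FS (cycleGraph (m+3)) Y).Adj ρ ρ₁) (p : Fin (m+3)) :
    col Y (ρ₁ p) = col Y (ρ p) := by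
  obtain ⟨a, b, hcyc, hY, h1, h2, h3⟩ := h
  by_cases hpa : p = a
  · subst hpa
    rw [← h2]
    exact ConnectedComponent.sound hY.symm.reachable
  by_cases hpb : p = b
  · subst hpb
    rw [← h1]
    exact ConnectedComponent.sound hY.reachable
  · rw [← h3 p hpa hpb]

/-- Any move of `FS(Cycle, Y)` made from an arrangement whose color pattern has a cut at
`p0` is a swap across a cycle edge `{a, a+1}` with `a ≠ p0`. -/
lemma nice_adj {Y : SimpleGraph (Fin (m+3))} {p0 : Fin (m+3)}
    {C : Fin (m+3) → Y.ConnectedComponent} (hcut : C p0 ≠ C (p0+1))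
    {ρ ρ₁ : Fin (m+3) ≃ Fin (m+3)} (hcol : ∀ p, col Y (ρ p) = C p)
    (h : (FS (cycleGraph (m+3)) Y).Adj ρ ρ₁) :
    ∃ a : Fin (m+3), a ≠ p0 ∧ Y.Adj (ρ a) (ρ (a+1)) ∧
      ρ₁ = (Equiv.swap a (a+1)).trans ρ := by
  obtain ⟨a, b, hcyc, hY, h1, h2, h3⟩ := h
  have hρ₁ : ρ₁ = (Equiv.swap a b).trans ρ := by
    apply Equiv.ext
    intro c
    show ρ₁ c = ρ (Equiv.swap a b c)
    by_cases hca : c = a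
    · subst hca; rw [Equiv.swap_apply_left]; exact h2.symm
    by_cases hcb : c = b
    · subst hcb; rw [Equiv.swap_apply_right]; exact h1.symm
    · rw [Equiv.swap_apply_of_ne_of_ne hca hcb]; exact (h3 c hca hcb).symm
  have hcc : col Y (ρ a) = col Y (ρ b) := ConnectedComponent.sound hY.reachable
  rw [cycleGraph_adj'] at hcyc
  rcases hcyc with hsub | hsub
  · -- (a - b).val = 1, so a = b + 1 : use `b` as the pivot
    have hsub' : a - b = (1 : Fin (m+3)) := Fin.ext (by rw [hsub, Fin.val_one])
    have hab : a = b + 1 := by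
      rw [sub_eq_iff_eq_add] at hsub'; rw [hsub']; ring
    have hbp : b ≠ p0 := by
      intro hbp; apply hcut
      rw [← hcol p0, ← hcol (p0+1), ← hbp, ← hab, hcc]
    refine ⟨b, hbp, ?_, ?_⟩
    · rw [← hab]; exact hY.symm
    · rw [hρ₁, ← hab, Equiv.swap_comm]
  · -- (b - a).val = 1, so b = a + 1
    have hsub' : b - a = (1 : Fin (m+3)) := Fin.ext (by rw [hsub, Fin.val_one])
    have hab : b = a + 1 := by
      rw [sub_eq_iff_eq_add] at hsub'; rw [hsub']; ring
    have hap : a ≠ p0 := by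
      intro hap; apply hcut
      rw [← hcol p0, ← hcol (p0+1), ← hap, ← hab, hcc]
    refine ⟨a, hap, ?_, ?_⟩
    · rw [← hab]; exact hY
    · rw [hρ₁, ← hab]

/-- If `ρ ≠ τ` then there is an adjacent (non-cut) inversion. -/
lemma exists_inv (p0 : Fin (m+3)) (ρ τ : Fin (m+3) ≃ Fin (m+3)) (hne : ρ ≠ τ) :
    ∃ a : Fin (m+3), a ≠ p0 ∧ (ρ a, ρ (a+1)) ∈ D p0 ρ τ := by
  set π : Fin (m+3) → Fin (m+3) :=
    fun k => (τ.symm (ρ (k + (p0+1)))) - (p0+1) with hπ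
  have hinj : Function.Injective π := by
    intro k₁ k₂ hk
    have h1 : τ.symm (ρ (k₁ + (p0+1))) = τ.symm (ρ (k₂ + (p0+1))) := by
      have h := congrArg (· + (p0+1)) hk
      simp only [hπ] at h
      simpa [sub_add_cancel] using h
    have h2 : k₁ + (p0+1) = k₂ + (p0+1) := ρ.injective (τ.symm.injective h1)
    exact add_right_cancel h2
  have hneid : π ≠ id := by
    intro hid
    apply hne
    apply Equiv.ext
    intro p
    have hp : π (p - (p0+1)) = p - (p0+1) := by rw [hid]; rfl
    simp only [hπ, sub_add_cancel] at hp
    have hps : τ.symm (ρ p) = p := by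
      have h := congrArg (· + (p0+1)) hp
      simpa [sub_add_cancel] using h
    exact ((Equiv.symm_apply_eq τ).mp hps)
  obtain ⟨k, hk, hdesc⟩ := exists_descent π hinj hneid
  have hklast : k ≠ Fin.last (m+2) := by
    intro hc; rw [hc] at hk; simp [Fin.last] at hk
  have hk1 : (⟨k.val + 1, hk⟩ : Fin (m+3)) = k + 1 := by
    apply Fin.ext
    rw [Fin.val_add_one]
    simp [hklast]
  set a : Fin (m+3) := k + (p0+1) with hadef
  have ha : a ≠ p0 := by
    intro hc
    have hkc : k = -1 := by
      have h : k + (p0+1) = p0 := by rw [← hadef]; exact hc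
      have h2 : k = p0 - (p0+1) := eq_sub_of_add_eq h
      rw [h2]; ring
    have hlast : (Fin.last (m+2) : Fin (m+3)) = -1 :=
      eq_neg_of_add_eq_zero_left (Fin.last_add_one (n := m+2))
    exact hklast (by rw [hlast, hkc])
  have ha1 : a + 1 = (k + 1) + (p0+1) := by rw [hadef]; ring
  have hq1 : qc p0 ρ (ρ a) = k.val := by
    unfold qc
    rw [Equiv.symm_apply_apply, hadef, add_sub_cancel_right]
  have hq2 : qc p0 ρ (ρ (a+1)) = k.val + 1 := by
    rw [qc_add_one p0 ρ ha, hq1]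
  have hq3 : qc p0 τ (ρ a) = (π k).val := by
    unfold qc; rw [hπ, hadef]
  have hq4 : qc p0 τ (ρ (a+1)) = (π (k+1)).val := by
    unfold qc; rw [hπ, ha1]
  refine ⟨a, ha, ?_, ?_⟩
  · show qc p0 ρ (ρ a) < qc p0 ρ (ρ (a+1))
    omega
  · show qc p0 τ (ρ (a+1)) < qc p0 τ (ρ a)
    rw [hq3, hq4, ← hk1]
    exact hdesc

end FSAux

namespace FSAux

variable {m : ℕ}

/-- Along any walk in `FS(Cycle, Y)` (with a color cut at `p0`), every discordant pair of
tokens is adjacent in `Y`. -/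
lemma walk_D_adj {Y : SimpleGraph (Fin (m+3))} {p0 : Fin (m+3)}
    {C : Fin (m+3) → Y.ConnectedComponent} (hcut : C p0 ≠ C (p0+1))
    {ρ τ : Fin (m+3) ≃ Fin (m+3)} (w : (FS (cycleGraph (m+3)) Y).Walk ρ τ) :
    (∀ p, col Y (ρ p) = C p) → ∀ u v, (u, v) ∈ D p0 ρ τ → Y.Adj u v := by
  induction w with
  | nil =>
    intro _ u v huv
    have h1 : qc p0 _ u < qc p0 _ v := huv.1
    have h2 : qc p0 _ v < qc p0 _ u := huv.2
    omega
  | @cons ρ x τ hadj w ih =>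
    intro hcol u v huv
    obtain ⟨a, ha, hY, hx⟩ := nice_adj hcut hcol hadj
    by_cases h1 : u = ρ a ∧ v = ρ (a+1)
    · rw [h1.1, h1.2]; exact hY
    by_cases h2 : u = ρ (a+1) ∧ v = ρ a
    · rw [h2.1, h2.2]; exact hY.symm
    · refine ih (fun p => (adj_col hadj p).trans (hcol p)) u v ?_
      rw [hx]
      exact (D_mem_iff p0 ρ τ rfl ha u v h1 h2).mpr huv

/-- Greedy bubble-sort: distance is at most the number of discordant pairs. -/
lemma greedy {Y : SimpleGraph (Fin (m+3))} {p0 : Fin (m+3)}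
    {C : Fin (m+3) → Y.ConnectedComponent} (hcut : C p0 ≠ C (p0+1))
    (τ : Fin (m+3) ≃ Fin (m+3)) (M : ℕ) :
    ∀ ρ : Fin (m+3) ≃ Fin (m+3), (∀ p, col Y (ρ p) = C p) →
      (FS (cycleGraph (m+3)) Y).Reachable ρ τ → (D p0 ρ τ).ncard ≤ M →
      (FS (cycleGraph (m+3)) Y).dist ρ τ ≤ (D p0 ρ τ).ncard := by
  induction M with
  | zero =>
    intro ρ hcol hreach hle
    by_cases hρτ : ρ = τ
    · subst hρτ; simp [SimpleGraph.dist_self]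
    · obtain ⟨a, ha, hinv⟩ := exists_inv p0 ρ τ hρτ
      have := Set.ncard_ne_zero_of_mem hinv (Set.toFinite _)
      omega
  | succ M ih =>
    intro ρ hcol hreach hle
    by_cases hρτ : ρ = τ
    · subst hρτ; simp [SimpleGraph.dist_self]
    obtain ⟨a, ha, hinv⟩ := exists_inv p0 ρ τ hρτ
    have hYadj : Y.Adj (ρ a) (ρ (a+1)) := by
      obtain ⟨w⟩ := hreach
      exact walk_D_adj hcut w hcol _ _ hinv
    set ρ₁ := (Equiv.swap a (a+1)).trans ρ with hρ₁
    have hadj : (FS (cycleGraph (m+3)) Y).Adj ρ ρ₁ := by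
      refine ⟨a, a+1, ?_, hYadj, ?_, ?_, ?_⟩
      · rw [cycleGraph_adj']
        right
        have h : (a+1) - a = (1 : Fin (m+3)) := by ring
        rw [h, Fin.val_one]
      · show ρ a = ρ (Equiv.swap a (a+1) (a+1))
        rw [Equiv.swap_apply_right]
      · show ρ (a+1) = ρ (Equiv.swap a (a+1) a)
        rw [Equiv.swap_apply_left]
      · intro c hca hcb
        show ρ c = ρ (Equiv.swap a (a+1) c)
        rw [Equiv.swap_apply_of_ne_of_ne hca hcb]
    have hDeq : D p0 ρ₁ τ = D p0 ρ τ \ {(ρ a, ρ (a+1))} :=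
      D_swap_eq p0 ρ τ rfl ha hinv
    have hcard : (D p0 ρ₁ τ).ncard = (D p0 ρ τ).ncard - 1 := by
      rw [hDeq]
      exact Set.ncard_diff_singleton_of_mem hinv
    have hpos : (D p0 ρ τ).ncard ≠ 0 := Set.ncard_ne_zero_of_mem hinv (Set.toFinite _)
    have hreach₁ : (FS (cycleGraph (m+3)) Y).Reachable ρ₁ τ :=
      (hadj.symm.reachable).trans hreach
    have hd₁ : (FS (cycleGraph (m+3)) Y).dist ρ₁ τ ≤ (D p0 ρ₁ τ).ncard :=
      ih ρ₁ (fun p => (adj_col hadj p).trans (hcol p)) hreach₁ (by omega)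
    have hkey : (FS (cycleGraph (m+3)) Y).dist ρ τ ≤
        (FS (cycleGraph (m+3)) Y).dist ρ₁ τ + 1 := by
      obtain ⟨w₁, hw₁⟩ := hreach₁.exists_walk_length_eq_dist
      have h := SimpleGraph.dist_le (SimpleGraph.Walk.cons hadj w₁)
      rw [SimpleGraph.Walk.length_cons, hw₁] at h
      omega
    omega

/-- The number of discordant pairs is at most the number of edges of `Y`. -/
lemma D_ncard_le {Y : SimpleGraph (Fin (m+3))} {p0 : Fin (m+3)}
    {C : Fin (m+3) → Y.ConnectedComponent} (hcut : C p0 ≠ C (p0+1))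
    {σ τ : Fin (m+3) ≃ Fin (m+3)} (hcol : ∀ p, col Y (σ p) = C p)
    (hreach : (FS (cycleGraph (m+3)) Y).Reachable σ τ) :
    (D p0 σ τ).ncard ≤ Y.edgeSet.ncard := by
  obtain ⟨w⟩ := hreach
  have hadj : ∀ z ∈ D p0 σ τ, Y.Adj z.1 z.2 := by
    rintro ⟨u, v⟩ hz
    exact walk_D_adj hcut w hcol u v hz
  have hinj : Set.InjOn (fun z : Fin (m+3) × Fin (m+3) => s(z.1, z.2)) (D p0 σ τ) := by
    rintro ⟨u, v⟩ h1 ⟨u', v'⟩ h2 he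
    simp only [Sym2.eq, Sym2.rel_iff', Prod.mk.injEq, Prod.swap_prod_mk] at he
    rcases he with ⟨rfl, rfl⟩ | ⟨rfl, rfl⟩
    · rfl
    · exfalso
      have a1 : qc p0 σ u < qc p0 σ v := h1.1
      have a2 : qc p0 σ v < qc p0 σ u := h2.1
      omega
  have himg : (fun z : Fin (m+3) × Fin (m+3) => s(z.1, z.2)) '' (D p0 σ τ) ⊆ Y.edgeSet := by
    rintro e ⟨z, hz, rfl⟩
    exact (Y.mem_edgeSet).mpr (hadj z hz)
  calc (D p0 σ τ).ncard
      = ((fun z : Fin (m+3) × Fin (m+3) => s(z.1, z.2)) '' (D p0 σ τ)).ncard :=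
        (Set.ncard_image_of_injOn hinj).symm
    _ ≤ Y.edgeSet.ncard := Set.ncard_le_ncard himg (Set.toFinite _)

end FSAux

namespace FSAux

variable {m : ℕ}

/-- Sparsity or an isolated vertex forces `Y` to be disconnected. -/
lemma exists_col_ne {Y : SimpleGraph (Fin (m+3))}
    (hY : (∃ v : Fin (m+3), ∀ u, ¬ Y.Adj v u) ∨ Y.edgeSet.ncard ≤ (m+3) - 2) :
    ∃ u w : Fin (m+3), col Y u ≠ col Y w := by
  by_contra hc
  push_neg at hc
  have hreach : ∀ u w : Fin (m+3), Y.Reachable u w := fun u w =>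
    ConnectedComponent.exact (hc u w)
  rcases hY with ⟨v, hv⟩ | hle
  · have h2 : Y.Reachable v (v+1) := hreach v (v+1)
    have hne : v ≠ v + 1 := by
      intro hc'
      have : (1 : Fin (m+3)) = 0 := by
        have := congrArg (· - v) hc'
        simpa [add_sub_cancel_left] using this.symm
      exact one_ne_zero this
    have hfix : ∀ x : Fin (m+3), Y.Reachable v x → v = x := by
      intro x hx
      obtain ⟨w⟩ := hx
      cases w with
      | nil => rfl
      | cons hadj _ => exact absurd hadj (hv _)
    exact hne (hfix _ h2)
  · have hstep : ∀ v : Fin (m+3), v ≠ 0 → ∃ w, Y.Adj v w ∧ Y.dist w 0 < Y.dist v 0 := by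
      intro v hv
      have hd : Y.dist v 0 ≠ 0 :=
        (SimpleGraph.dist_ne_zero_iff_ne_and_reachable.mpr ⟨hv, hreach v 0⟩)
      obtain ⟨p, hp⟩ := (hreach v 0).exists_walk_length_eq_dist
      cases p with
      | nil => rw [← hp] at hd; simp at hd
      | @cons _ x _ hadj q =>
        refine ⟨x, hadj, ?_⟩
        have h1 : Y.dist x 0 ≤ q.length := SimpleGraph.dist_le q
        have h2 : q.length + 1 = Y.dist v 0 := by
          rw [← hp, SimpleGraph.Walk.length_cons]
        omega
    choose f hf1 hf2 using hstep
    let g : {v : Fin (m+3) // v ≠ 0} → Y.edgeSet := fun v =>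
      ⟨s(v.1, f v.1 v.2), (Y.mem_edgeSet).mpr (hf1 v.1 v.2)⟩
    have ginj : Function.Injective g := by
      rintro ⟨v, hv⟩ ⟨v', hv'⟩ he
      simp only [g, Subtype.mk.injEq, Sym2.eq, Sym2.rel_iff', Prod.mk.injEq,
        Prod.swap_prod_mk] at he
      rcases he with ⟨h1, _⟩ | ⟨h1, h2⟩
      · exact Subtype.ext h1
      · exfalso
        have d1 := hf2 v hv
        have d2 := hf2 v' hv'
        rw [h2] at d1
        rw [← h1] at d2
        omega
    have hcard1 : Fintype.card {v : Fin (m+3) // v ≠ 0} = m + 2 := by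
      rw [Fintype.card_subtype_compl (p := fun v : Fin (m+3) => v = 0)]
      simp [Fintype.card_subtype_eq]
    have hlecard : Nat.card {v : Fin (m+3) // v ≠ 0} ≤ Nat.card Y.edgeSet :=
      Nat.card_le_card_of_injective g ginj
    rw [Nat.card_eq_fintype_card, hcard1, Nat.card_coe_set_eq] at hlecard
    omega

/-- From two tokens of different colors, find a cut in the cyclic color pattern of `σ`. -/
lemma exists_cut {Y : SimpleGraph (Fin (m+3))} (σ : Fin (m+3) ≃ Fin (m+3))
    (hnc : ∃ u w : Fin (m+3), col Y u ≠ col Y w) :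
    ∃ p0 : Fin (m+3), col Y (σ p0) ≠ col Y (σ (p0+1)) := by
  by_contra hc
  push_neg at hc
  obtain ⟨u, w, hne⟩ := hnc
  apply hne
  have hstep : ∀ (j : ℕ) (p : Fin (m+3)), col Y (σ (p + (j : Fin (m+3)))) = col Y (σ p) := by
    intro j
    induction j with
    | zero => simp
    | succ j ih =>
      intro p
      have hcast : ((j+1 : ℕ) : Fin (m+3)) = ((j : ℕ) : Fin (m+3)) + 1 := by
        push_cast; ring
      rw [hcast, ← add_assoc]
      exact ((hc (p + (j : Fin (m+3)))).symm).trans (ih p)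
  have key : ∀ x y : Fin (m+3), col Y (σ x) = col Y (σ y) := by
    intro x y
    have h := hstep (x - y).val y
    rw [Fin.cast_val_eq_self] at h
    have h2 : y + (x - y) = x := by ring
    rw [h2] at h
    exact h
  have h3 := key (σ.symm u) (σ.symm w)
  simpa using h3

end FSAux

open FSAux in
/-- Let `n ≥ 3` and let `Y` be an `n`-vertex graph which has an isolated
vertex or satisfies `|E(Y)| ≤ n - 2`. Then every connected component of `FS(Cycle_n, Y)` has
diameter at most `|E(Y)|`. -/
theorem fs_cycle_component_diam_of_sparse (n : ℕ) (hn : 3 ≤ n) (Y : SimpleGraph (Fin n))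
    (hY : (∃ v : Fin n, ∀ u, ¬ Y.Adj v u) ∨ Y.edgeSet.ncard ≤ n - 2)
    (σ τ : Fin n ≃ Fin n) (h : (FS (cycleGraph n) Y).Reachable σ τ) :
    (FS (cycleGraph n) Y).dist σ τ ≤ Y.edgeSet.ncard := by
  obtain ⟨m, rfl⟩ : ∃ m, n = m + 3 := ⟨n - 3, by omega⟩
  obtain ⟨p0, hcut⟩ := exists_cut σ (exists_col_ne hY)
  have hd : (FS (cycleGraph (m+3)) Y).dist σ τ ≤ (D p0 σ τ).ncard :=
    greedy (C := fun p => col Y (σ p)) hcut τ ((D p0 σ τ).ncard) σ (fun p => rfl) h le_rfl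
  exact hd.trans (D_ncard_le (C := fun p => col Y (σ p)) hcut (fun p => rfl) h)
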